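/- Let λ_u > 0, H > 0, η_L > 0, η_N > 0 and R_e ≥ 0. Define P̄_c(R) = exp(−(π/2)·λ_u·H·(π·(η_N/η_L)^{1/2}·2^{R/2} − 2·H)) and C_s(R) = λ_u·(R − R_e)·P̄_c(R). Then: (i) there exists a unique R* > R_e satisfying the first-order condition (ln 2/4)·π²·λ_u·H·(η_N/η_L)^{1/2}·2^{R*/2}·(R* − R_e) = 1; (ii) C_s is strictly increasing on [R_e, R*] and strictly decreasing on [R*, ∞), so R* is the unique maximizer of C_s over [R_e, ∞); (iii) R* = R_e + (2/ln 2)·w, where w is the unique positive real satisfying w·e^w = 2^{1 − R_e/2}·η_L^{1/2}/(π²·λ_u·H·η_N^{1/2}). -/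

import Mathlib

open Real Set

/-- Theorem 3 of the paper: the optimal codeword rate maximizing the secrecy transmission
capacity `C_s(R) = λ_u (R - R_e) P̄_c(R)`, with its first-order characterization and its
expression via the Lambert W function. -/
theorem optimal_codeword_rate
    (lu H eL eN Re : ℝ) (hlu : 0 < lu) (hH : 0 < H) (heL : 0 < eL) (heN : 0 < eN)
    (hRe : 0 ≤ Re)
    (Pc Cs : ℝ → ℝ)
    (hPc : ∀ R : ℝ, Pc R
      = Real.exp (-(π / 2) * lu * H * (π * Real.sqrt (eN / eL) * (2 : ℝ) ^ (R / 2) - 2 * H)))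
    (hCs : ∀ R : ℝ, Cs R = lu * (R - Re) * Pc R) :
    ∃ Rstar : ℝ, Rstar > Re ∧
      -- (i) first-order condition, with uniqueness of its solution on (Re, ∞)
      (Real.log 2 / 4) * π ^ 2 * lu * H * Real.sqrt (eN / eL)
          * (2 : ℝ) ^ (Rstar / 2) * (Rstar - Re) = 1 ∧
      (∀ R : ℝ, R > Re →
        (Real.log 2 / 4) * π ^ 2 * lu * H * Real.sqrt (eN / eL)
            * (2 : ℝ) ^ (R / 2) * (R - Re) = 1 → R = Rstar) ∧
      -- (ii) monotonicity and unique maximizer over [Re, ∞)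
      StrictMonoOn Cs (Icc Re Rstar) ∧
      StrictAntiOn Cs (Ici Rstar) ∧
      (∀ R ∈ Ici Re, R ≠ Rstar → Cs R < Cs Rstar) ∧
      -- (iii) Lambert-W expression
      (∀ w : ℝ, 0 < w →
        w * Real.exp w
          = (2 : ℝ) ^ (1 - Re / 2) * Real.sqrt eL / (π ^ 2 * lu * H * Real.sqrt eN) →
        Rstar = Re + (2 / Real.log 2) * w) := by
  have hπ : (0:ℝ) < π := Real.pi_pos
  have hlog2 : (0:ℝ) < Real.log 2 := Real.log_pos (by norm_num)
  set s := Real.sqrt (eN / eL) with hs_def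
  have hs : 0 < s := Real.sqrt_pos.2 (div_pos heN heL)
  set c := Real.log 2 / 2 with hc_def
  have hc : 0 < c := by positivity
  set a := Real.log 2 / 4 * π ^ 2 * lu * H * s with ha_def
  have ha : 0 < a := by positivity
  have hrpow : ∀ R : ℝ, (2:ℝ) ^ (R/2) = Real.exp (c * R) := by
    intro R
    rw [Real.rpow_def_of_pos (by norm_num : (0:ℝ) < 2)]
    congr 1
    rw [hc_def]; ring
  set g : ℝ → ℝ := fun R => a * Real.exp (c * R) * (R - Re) with hg_def
  -- g is strictly monotone on [Re, ∞)
  have hgmono : StrictMonoOn g (Ici Re) := by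
    intro x hx y hy hxy
    simp only [hg_def]
    have hx' : 0 ≤ x - Re := by simpa [sub_nonneg] using hx
    have h1 : Real.exp (c * x) < Real.exp (c * y) :=
      Real.exp_lt_exp.2 (by nlinarith)
    calc a * Real.exp (c * x) * (x - Re)
        ≤ a * Real.exp (c * x) * (y - Re) := by
          apply mul_le_mul_of_nonneg_left (by linarith) (by positivity)
      _ < a * Real.exp (c * y) * (y - Re) := by
          apply mul_lt_mul_of_pos_right _ (by linarith)
          exact mul_lt_mul_of_pos_left h1 ha
  -- existence of Rstar with g Rstar = 1
  obtain ⟨Rstar, hRmem, hgR⟩ : ∃ R ∈ Icc Re (Re + 1 + 1/a), g R = 1 := by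
    have hcont : Continuous g := by
      simp only [hg_def]; fun_prop
    have hle : Re ≤ Re + 1 + 1/a := by
      have : 0 < 1/a := by positivity
      linarith
    have h0 : g Re = 0 := by simp [hg_def]
    have h1 : 1 ≤ g (Re + 1 + 1/a) := by
      have he : 1 ≤ Real.exp (c * (Re + 1 + 1/a)) := by
        apply Real.one_le_exp
        have : 0 < 1/a := by positivity
        nlinarith
      simp only [hg_def]
      have harith : (Re + 1 + 1/a - Re) = 1 + 1/a := by ring
      rw [harith]
      have hposr : (0:ℝ) < 1 + 1/a := by positivity
      have : a * 1 * (1 + 1/a) ≤ a * Real.exp (c * (Re + 1 + 1/a)) * (1 + 1/a) := by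
        apply mul_le_mul_of_nonneg_right _ hposr.le
        nlinarith
      have haa : a * 1 * (1 + 1/a) = a + 1 := by field_simp
      nlinarith
    have hivt := intermediate_value_Icc hle hcont.continuousOn
    have hmem : (1:ℝ) ∈ Icc (g Re) (g (Re + 1 + 1/a)) := by
      rw [h0]; exact ⟨zero_le_one, h1⟩
    obtain ⟨R, hR, hgR⟩ := hivt hmem
    exact ⟨R, hR, hgR⟩
  have hRgt : Rstar > Re := by
    by_contra h
    push_neg at h
    have hE := Real.exp_pos (c * Rstar)
    simp only [hg_def] at hgR
    have h1 : 0 < a * Real.exp (c * Rstar) := mul_pos ha hE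
    have h2 : a * Real.exp (c * Rstar) * (Rstar - Re) ≤ 0 :=
      mul_nonpos_of_nonneg_of_nonpos h1.le (by linarith)
    linarith
  -- uniqueness
  have huniq : ∀ R : ℝ, R > Re → g R = 1 → R = Rstar := by
    intro R hR h1
    exact hgmono.injOn (mem_Ici.2 hR.le) (mem_Ici.2 hRgt.le) (h1.trans hgR.symm)
  -- derivative of Cs
  have hCsF : ∀ R : ℝ, Cs R
      = lu * (R - Re) * Real.exp (-(π/2) * lu * H * (π * s * Real.exp (c * R) - 2 * H)) := by
    intro R
    rw [hCs, hPc, hrpow]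
  have hderiv : ∀ R : ℝ, HasDerivAt Cs
      (lu * Real.exp (-(π/2) * lu * H * (π * s * Real.exp (c * R) - 2 * H)) * (1 - g R)) R := by
    intro R
    have hCsfun : Cs = fun R => lu * (R - Re)
        * Real.exp (-(π/2) * lu * H * (π * s * Real.exp (c * R) - 2 * H)) := funext hCsF
    rw [hCsfun]
    have h1 : HasDerivAt (fun x : ℝ => c * x) c R := by
      simpa using (hasDerivAt_id R).const_mul c
    have h2 := h1.exp
    have h3 := ((h2.const_mul (π * s)).sub_const (2 * H)).const_mul (-(π/2) * lu * H)
    have h4 := h3.exp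
    have h5 : HasDerivAt (fun x : ℝ => lu * (x - Re)) lu R := by
      simpa using ((hasDerivAt_id R).sub_const Re).const_mul lu
    have h6 := h5.mul h4
    refine HasDerivAt.congr_deriv h6 ?_
    simp only [hg_def, ha_def, hc_def]
    ring
  have hE : ∀ R : ℝ, 0 < Real.exp (-(π/2) * lu * H * (π * s * Real.exp (c * R) - 2 * H)) :=
    fun R => Real.exp_pos _
  -- monotonicity
  have hmono : StrictMonoOn Cs (Icc Re Rstar) := by
    apply strictMonoOn_of_deriv_pos (convex_Icc Re Rstar)
    · exact fun x _ => (hderiv x).continuousAt.continuousWithinAt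
    · intro x hx
      rw [interior_Icc] at hx
      rw [(hderiv x).deriv]
      have hgx : g x < g Rstar := hgmono (mem_Ici.2 hx.1.le) (mem_Ici.2 hRgt.le) hx.2
      rw [hgR] at hgx
      exact mul_pos (mul_pos hlu (hE x)) (by linarith)
  have hanti : StrictAntiOn Cs (Ici Rstar) := by
    apply strictAntiOn_of_deriv_neg (convex_Ici Rstar)
    · exact fun x _ => (hderiv x).continuousAt.continuousWithinAt
    · intro x hx
      rw [interior_Ici] at hx
      rw [(hderiv x).deriv]
      have hgx : g Rstar < g x :=
        hgmono (mem_Ici.2 hRgt.le) (mem_Ici.2 (hRgt.trans hx).le) hx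
      rw [hgR] at hgx
      exact mul_neg_of_pos_of_neg (mul_pos hlu (hE x)) (by linarith)
  refine ⟨Rstar, hRgt, ?_, ?_, hmono, hanti, ?_, ?_⟩
  · rw [hrpow]; exact hgR
  · intro R hR h1
    rw [hrpow] at h1
    exact huniq R hR h1
  · intro R hR hne
    rcases lt_or_gt_of_ne hne with h | h
    · exact hmono ⟨mem_Ici.1 hR, h.le⟩ ⟨hRgt.le, le_refl _⟩ h
    · exact hanti (mem_Ici.2 le_rfl) (mem_Ici.2 h.le) h
  · intro w hw hweq
    have hs_eq : s = Real.sqrt eN / Real.sqrt eL := Real.sqrt_div heN.le eL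
    have hsl : Real.sqrt eL ≠ 0 := (Real.sqrt_pos.2 heL).ne'
    have hsn : Real.sqrt eN ≠ 0 := (Real.sqrt_pos.2 heN).ne'
    have h2R : (2:ℝ) ^ (1 - Re/2) = 2 * Real.exp (-(c * Re)) := by
      rw [Real.rpow_def_of_pos (by norm_num : (0:ℝ) < 2)]
      rw [show Real.log 2 * (1 - Re/2) = Real.log 2 + (-(c * Re)) by rw [hc_def]; ring]
      rw [Real.exp_add, Real.exp_log (by norm_num)]
    have key : w * Real.exp w * Real.exp (c * Re)
        = 2 * Real.sqrt eL / (π ^ 2 * lu * H * Real.sqrt eN) := by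
      rw [hweq, h2R, Real.exp_neg]
      have hEc : Real.exp (c * Re) ≠ 0 := (Real.exp_pos _).ne'
      field_simp
    have hRlt : Re < Re + 2 / Real.log 2 * w := by
      have : 0 < 2 / Real.log 2 * w := by positivity
      linarith
    have hgR1 : g (Re + 2 / Real.log 2 * w) = 1 := by
      have hexp : Real.exp (c * (Re + 2 / Real.log 2 * w))
          = Real.exp (c * Re) * Real.exp w := by
        rw [← Real.exp_add]
        congr 1
        rw [hc_def]; field_simp
      simp only [hg_def]
      rw [hexp]
      have hstep : a * (Real.exp (c * Re) * Real.exp w) * (Re + 2 / Real.log 2 * w - Re)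
          = Real.log 2 / 4 * π ^ 2 * lu * H * (Real.sqrt eN / Real.sqrt eL)
            * (2 / Real.log 2) * (w * Real.exp w * Real.exp (c * Re)) := by
        rw [ha_def, hs_eq]; ring
      rw [hstep, key]
      field_simp
      ring
    exact (huniq _ hRlt hgR1).symm
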